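/- Let M ≻ 0 be symmetric positive definite and t ∈ ℝ. Then M + t·E_{11} ⪰ 0 if and only if t ≥ -1/((M^{-1})_{11}). Equivalently, by the Schur complement, M + t E_{11} ⪰ 0 iff M_{11} + t ≥ b^T C^{-1} b, where M = [[M_{11}, b^T],[b, C]] is the block partition isolating the (1,1) entry. -/

import Mathlib

open Matrix

/-- 1x1 PosSemidef iff entry nonneg -/
lemma psd_one_dim (N : Matrix (Fin 1) (Fin 1) ℝ) : N.PosSemidef ↔ 0 ≤ N 0 0 := by
  constructor
  · intro h
    have := (posSemidef_iff_dotProduct_mulVec.mp h).2 (fun _ => 1)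
    simpa [dotProduct, mulVec] using this
  · intro h
    refine posSemidef_iff_dotProduct_mulVec.mpr ⟨?_, fun x => ?_⟩
    · ext i j
      fin_cases i; fin_cases j; simp [conjTranspose_apply]
    · have : star x ⬝ᵥ N *ᵥ x = N 0 0 * (x 0 * x 0) := by
        simp [dotProduct, mulVec, Fin.sum_univ_one]; ring
      rw [this]
      exact mul_nonneg h (mul_self_nonneg _)

def splitE (m : ℕ) : Fin 1 ⊕ Fin m ≃ Fin (m + 1) where
  toFun := Sum.elim (fun _ => 0) Fin.succ
  invFun := Fin.cases (Sum.inl 0) Sum.inr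
  left_inv := by rintro (x | x) <;> simp [Fin.eq_zero]
  right_inv := by
    intro x
    induction x using Fin.cases <;> simp

theorem stmt9 (m : ℕ) (M : Matrix (Fin (m + 1)) (Fin (m + 1)) ℝ)
    (hM : M.PosDef) (t : ℝ)
    (b : Fin m → ℝ) (hb : ∀ i, b i = M i.succ 0)
    (C : Matrix (Fin m) (Fin m) ℝ) (hC : C = M.submatrix Fin.succ Fin.succ) :
    ((M + t • single 0 0 (1 : ℝ)).PosSemidef ↔ -(1 / (M⁻¹ 0 0)) ≤ t) ∧
    ((M + t • single 0 0 (1 : ℝ)).PosSemidef ↔ b ⬝ᵥ C⁻¹ *ᵥ b ≤ M 0 0 + t) := by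
  set e := splitE m with he
  set Bm : Matrix (Fin 1) (Fin m) ℝ := of fun _ j => b j with hBm
  have hsymm : ∀ i j, M i j = M j i := fun i j => (congrFun (congrFun hM.1 i) j).symm.trans rfl
  -- C is positive definite
  have hCpd : C.PosDef := by
    refine posDef_iff_dotProduct_mulVec.mpr ⟨?_, ?_⟩
    · ext i j
      simp [hC, conjTranspose_apply, hsymm i.succ j.succ]
    · intro x hx
      have hy : (Fin.cons 0 x : Fin (m+1) → ℝ) ≠ 0 := by
        intro h
        apply hx
        ext i
        have := congrFun h i.succ
        simpa using this
      have := (posDef_iff_dotProduct_mulVec.mp hM).2 hy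
      have hq : star (Fin.cons 0 x : Fin (m+1) → ℝ) ⬝ᵥ M *ᵥ (Fin.cons 0 x) =
          star x ⬝ᵥ C *ᵥ x := by
        simp [dotProduct, mulVec, Fin.sum_univ_succ, hC]
      rwa [hq] at this
  haveI : Invertible C := C.invertibleOfIsUnitDet hCpd.det_pos.ne'.isUnit
  have hinvC : ⅟C = C⁻¹ := invOf_eq_nonsing_inv C
  -- block decomposition
  have key : ∀ s : ℝ, (M + s • single 0 0 (1 : ℝ)).submatrix e e =
      fromBlocks (of fun _ _ => M 0 0 + s) Bm Bmᴴ C := by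
    intro s
    ext i j
    rcases i with i | i <;> rcases j with j | j <;>
      simp [he, splitE, hBm, hC, fromBlocks, conjTranspose_apply, Matrix.add_apply,
        single_apply, hb, hsymm, Fin.succ_ne_zero, eq_comm]
  -- the Schur complement
  have hschur : ∀ s : ℝ, ((of fun _ _ => M 0 0 + s : Matrix (Fin 1) (Fin 1) ℝ)
      - Bm * C⁻¹ * Bmᴴ) 0 0 = M 0 0 + s - b ⬝ᵥ C⁻¹ *ᵥ b := by
    intro s
    have : (Bm * C⁻¹ * Bmᵀ) 0 0 = b ⬝ᵥ C⁻¹ *ᵥ b := by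
      simp only [Matrix.mul_apply, hBm, of_apply, transpose_apply, dotProduct, mulVec,
        RCLike.star_def, starRingEnd_apply, star_trivial, Finset.sum_mul]
      rw [Finset.sum_comm]
      apply Finset.sum_congr rfl
      intro j _
      rw [Finset.mul_sum]
      apply Finset.sum_congr rfl
      intro k _
      ring
    simp [Matrix.sub_apply, this]
  -- main equivalence with the Schur condition
  have main : ∀ s : ℝ, (M + s • single 0 0 (1 : ℝ)).PosSemidef ↔
      b ⬝ᵥ C⁻¹ *ᵥ b ≤ M 0 0 + s := by
    intro s
    rw [← posSemidef_submatrix_equiv e, key s,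
      PosDef.fromBlocks₂₂ _ _ hCpd, psd_one_dim, hschur s]
    constructor <;> intro h <;> linarith
  set s₀ : ℝ := b ⬝ᵥ C⁻¹ *ᵥ b with hs₀
  -- determinant identity
  have hMe : M.submatrix e e = fromBlocks (of fun _ _ => M 0 0 + 0) Bm Bmᴴ C := by
    have := key 0
    simpa using this
  have hdet : M.det = C.det * (M 0 0 + 0 - s₀) := by
    rw [← det_submatrix_equiv_self e M, hMe, det_fromBlocks₂₂, hinvC, det_fin_one, hschur 0]
  have hα : 0 < M 0 0 - s₀ := by
    have h1 := hM.det_pos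
    have h2 := hCpd.det_pos
    rw [hdet] at h1
    nlinarith
  -- compute M⁻¹ 0 0
  haveI hSinv : Invertible ((of fun _ _ => M 0 0 + 0 : Matrix (Fin 1) (Fin 1) ℝ)
      - Bm * ⅟C * Bmᴴ) := by
    apply Matrix.invertibleOfIsUnitDet
    rw [det_fin_one, hinvC, hschur 0]
    exact (by linarith : (0:ℝ) < M 0 0 + 0 - s₀).ne'.isUnit
  haveI := fromBlocks₂₂Invertible (of fun _ _ => M 0 0 + 0 : Matrix (Fin 1) (Fin 1) ℝ) Bm Bmᴴ C
  have hinv00 : M⁻¹ 0 0 = (M 0 0 - s₀)⁻¹ := by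
    have h1 : M⁻¹ 0 0 = (M.submatrix e e)⁻¹ (Sum.inl 0) (Sum.inl 0) := by
      rw [inv_submatrix_equiv]
      rfl
    rw [h1, hMe, ← invOf_eq_nonsing_inv, invOf_fromBlocks₂₂_eq]
    show (⅟((of fun _ _ => M 0 0 + 0 : Matrix (Fin 1) (Fin 1) ℝ) - Bm * ⅟C * Bmᴴ)) 0 0
      = (M 0 0 - s₀)⁻¹
    rw [invOf_eq_nonsing_inv, inv_def, det_fin_one]
    simp [Matrix.adjugate_fin_one, hinvC]
    have h2 := hschur 0
    simp [Matrix.sub_apply] at h2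
    linarith
  have hiff : -(1 / (M⁻¹ 0 0)) ≤ t ↔ s₀ ≤ M 0 0 + t := by
    rw [hinv00, one_div, inv_inv]
    constructor <;> intro h <;> linarith
  exact ⟨(main t).trans hiff.symm, main t⟩
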